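/- Let E ≥ 1 and m ≥ 1 be natural numbers, let π : Fin E → ℝ and p : Fin E → ℝ be strictly positive (the class priors and the class-conditional density values at a fixed point), let h ∈ ℝ^m, and let w : Fin E → ℝ^m and b : Fin E → ℝ with w 0 = 0 and b 0 = 0. If for every τ ∈ Fin E the softmax output equals the true posterior, i.e. exp(⟨w τ, h⟩ + b τ) / (∑_{e} exp(⟨w e, h⟩ + b e)) = p τ · π τ / (∑_{e} p e · π e), then for every τ ∈ Fin E one has ⟨w τ, h⟩ + b τ = log (p τ) − log (p 0) + log (π τ / π 0). -/
import Mathlib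


/-- If a softmax classifier with weights `w`, biases `b` (with
`w 0 = 0`, `b 0 = 0`) and feature vector `h` outputs the true Bayes posteriors for classes
with priors `prior` and class-conditional density values `pdens`, then each logit equals the
log-density difference relative to class `0` plus the log prior ratio:
`⟨w τ, h⟩ + b τ = log (pdens τ) - log (pdens 0) + log (prior τ / prior 0)`. -/
theorem softmax_logits_eq_log_density_differences
    (E m : ℕ) [NeZero E] [NeZero m]
    (prior pdens : Fin E → ℝ)
    (hprior : ∀ e, 0 < prior e) (hpdens : ∀ e, 0 < pdens e)
    (h : Fin m → ℝ) (w : Fin E → Fin m → ℝ) (b : Fin E → ℝ)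
    (hw0 : w 0 = 0) (hb0 : b 0 = 0)
    (hsoftmax : ∀ τ : Fin E,
      Real.exp (∑ i, w τ i * h i + b τ) / (∑ e, Real.exp (∑ i, w e i * h i + b e))
        = pdens τ * prior τ / (∑ e, pdens e * prior e)) :
    ∀ τ : Fin E,
      ∑ i, w τ i * h i + b τ
        = Real.log (pdens τ) - Real.log (pdens 0) + Real.log (prior τ / prior 0) := by
  intro τ
  set S := ∑ e, Real.exp (∑ i, w e i * h i + b e) with hS
  have hSpos : 0 < S := Finset.sum_pos (fun e _ => Real.exp_pos _) ⟨0, Finset.mem_univ 0⟩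
  have hz0 : (∑ i, w 0 i * h i) + b 0 = 0 := by
    simp [hw0, hb0]
  have h0 := hsoftmax 0
  have hτ := hsoftmax τ
  rw [hz0, Real.exp_zero] at h0
  have hDpos : 0 < ∑ e, pdens e * prior e :=
    Finset.sum_pos (fun e _ => mul_pos (hpdens e) (hprior e)) ⟨0, Finset.mem_univ 0⟩
  have key : Real.exp (∑ i, w τ i * h i + b τ)
      = pdens τ * prior τ / (pdens 0 * prior 0) := by
    have hSval : S = (∑ e, pdens e * prior e) / (pdens 0 * prior 0) := by
      rw [div_eq_div_iff hSpos.ne' hDpos.ne', one_mul] at h0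
      rw [eq_div_iff (mul_pos (hpdens 0) (hprior 0)).ne']
      linarith [h0]
    have hτ' : Real.exp (∑ i, w τ i * h i + b τ)
        = pdens τ * prior τ / (∑ e, pdens e * prior e) * S := by
      field_simp at hτ ⊢
      linarith [hτ]
    rw [hτ', hSval]
    field_simp
  have := congrArg Real.log key
  rw [Real.log_exp] at this
  rw [this, Real.log_div (mul_pos (hpdens τ) (hprior τ)).ne' (mul_pos (hpdens 0) (hprior 0)).ne',
    Real.log_mul (hpdens τ).ne' (hprior τ).ne', Real.log_mul (hpdens 0).ne' (hprior 0).ne',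
    Real.log_div (hprior τ).ne' (hprior 0).ne']
  ring
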